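/- If {a_1, ..., a_k} is a set of pairwise commuting elements of a finite group G with k strictly greater than the minimal abelian partition size ϑ_a(G), then G equals the union over all 1 ≤ i < j ≤ k of the centralizers C_G(a_i⁻¹ a_j). -/
import Mathlib


/-- An abelian partition of a group `G`: a family of `n` pairwise disjoint sets covering `G`,
each of size at least 2 and consisting of pairwise commuting elements. -/
def IsAbelianPartition {G : Type*} [Group G] {n : ℕ} (A : Fin n → Set G) : Prop :=
  (∀ i, 2 ≤ (A i).ncard) ∧ (⋃ i, A i) = Set.univ ∧
    Pairwise (Function.onFun Disjoint A) ∧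
    ∀ i, ∀ x ∈ A i, ∀ y ∈ A i, x * y = y * x

/-- The minimal number of parts in an abelian partition of `G` (0 if none exists). -/
noncomputable def apDegree (G : Type*) [Group G] : ℕ :=
  sInf {n | ∃ A : Fin n → Set G, IsAbelianPartition A}

/-- The maximal size of a noncommuting subset of `G`. -/
noncomputable def maxNoncommuting (G : Type*) [Group G] : ℕ :=
  sSup {k | ∃ S : Set G, S.ncard = k ∧ ∀ x ∈ S, ∀ y ∈ S, x ≠ y → x * y ≠ y * x}

theorem union_of_centralizers_of_large_commuting_set
    {G : Type*} [Group G] [Finite G]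
    (hap : ∃ (n : ℕ) (A : Fin n → Set G), IsAbelianPartition A)
    {k : ℕ} (a : Fin k → G) (hinj : Function.Injective a)
    (hcomm : ∀ i j, a i * a j = a j * a i)
    (hk : apDegree G < k) :
    ∀ g : G, ∃ i j : Fin k, i < j ∧
      g * ((a i)⁻¹ * a j) = ((a i)⁻¹ * a j) * g := by
  intro g
  -- a minimal abelian partition
  have hmemInf : apDegree G ∈ {n | ∃ A : Fin n → Set G, IsAbelianPartition A} :=
    Nat.sInf_mem hap
  obtain ⟨A, hcard, hcover, hdisj, habel⟩ := hmemInf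
  -- for each i, pick the part containing g * a i
  have hmem : ∀ i : Fin k, ∃ p : Fin (apDegree G), g * a i ∈ A p := by
    intro i
    have : g * a i ∈ ⋃ p, A p := by rw [hcover]; exact Set.mem_univ _
    simpa using this
  choose f hf using hmem
  -- pigeonhole
  obtain ⟨i, j, hij, hfij⟩ := Fintype.exists_ne_map_eq_of_card_lt f (by simpa using hk)
  have hc : (g * a i) * (g * a j) = (g * a j) * (g * a i) :=
    habel (f j) _ (hfij ▸ hf i) _ (hf j)
  -- key algebraic step
  have key : ∀ i j : Fin k, (g * a i) * (g * a j) = (g * a j) * (g * a i) →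
      g * ((a i)⁻¹ * a j) = ((a i)⁻¹ * a j) * g := by
    intro i j h
    have hC : Commute (a i) (a j) := hcomm i j
    have h2 : a i * (g * a j) = a j * (g * a i) := by
      apply mul_left_cancel (a := g)
      calc g * (a i * (g * a j)) = (g * a i) * (g * a j) := by group
        _ = (g * a j) * (g * a i) := h
        _ = g * (a j * (g * a i)) := by group
    apply mul_left_cancel (a := a i)
    have hinv : (a i)⁻¹ * a j = a j * (a i)⁻¹ := hC.inv_left.eq
    calc a i * (g * ((a i)⁻¹ * a j))
        = a i * (g * (a j * (a i)⁻¹)) := by rw [hinv]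
      _ = (a i * (g * a j)) * (a i)⁻¹ := by group
      _ = (a j * (g * a i)) * (a i)⁻¹ := by rw [h2]
      _ = a j * g := by group
      _ = a i * ((a i)⁻¹ * a j * g) := by group
  rcases lt_or_gt_of_ne hij with hlt | hlt
  · exact ⟨i, j, hlt, key i j hc⟩
  · exact ⟨j, i, hlt, key j i hc.symm⟩
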